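/- Let u = (u_1, ..., u_n) ∈ F_q^n with all u_i ≠ 0, and let α_1, ..., α_n ∈ F_q be distinct, satisfying Σ_{i=1}^n u_i² α_i^j = 0 for all 0 ≤ j ≤ n−2. Then for any two polynomials f_1, f_2 ∈ F_q[x] with deg(f_1 f_2 mod h) ≤ n − 2, where h(x) = ∏_i (x − α_i), the vectors (u_1 f_1(α_1), ..., u_n f_1(α_n)) and (u_1 f_2(α_1), ..., u_n f_2(α_n)) are orthogonal: Σ_{i=1}^n u_i² f_1(α_i) f_2(α_i) = 0. -/

import Mathlib

open Polynomial

/-- Let `u ∈ F_q^n` with all `u_i ≠ 0` and distinct `α_1, …, α_n ∈ F_q`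
satisfying `Σ_i u_i² α_i^j = 0` for all `0 ≤ j ≤ n−2`. Then for polynomials `f₁, f₂` with
`deg(f₁ f₂ mod h) ≤ n − 2`, where `h(x) = ∏_i (x − α_i)`, we have
`Σ_i u_i² f₁(α_i) f₂(α_i) = 0`. -/
theorem stmt_17 (F : Type) [Field F] (n : ℕ) (hn : 2 ≤ n)
    (α : Fin n → F) (hinj : Function.Injective α)
    (u : Fin n → F) (hu : ∀ i, u i ≠ 0)
    (hmom : ∀ j : ℕ, j ≤ n - 2 → ∑ i, (u i) ^ 2 * (α i) ^ j = 0)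
    (f₁ f₂ : Polynomial F)
    (hdeg : ((f₁ * f₂) %ₘ (∏ i, (X - C (α i)))).degree ≤ ((n - 2 : ℕ) : WithBot ℕ)) :
    ∑ i, (u i) ^ 2 * f₁.eval (α i) * f₂.eval (α i) = 0 := by
  set h : Polynomial F := ∏ i, (X - C (α i)) with hh
  set z : Polynomial F := (f₁ * f₂) %ₘ h with hzdef
  have hmonic : h.Monic := monic_prod_of_monic _ _ (fun i _ => monic_X_sub_C _)
  have hz : ∀ i, f₁.eval (α i) * f₂.eval (α i) = z.eval (α i) := by
    intro i
    have h0 : h.eval (α i) = 0 := by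
      rw [hh, eval_prod]
      exact Finset.prod_eq_zero (Finset.mem_univ i) (by simp)
    have := Polynomial.modByMonic_add_div (f₁ * f₂) h
    calc f₁.eval (α i) * f₂.eval (α i) = (f₁ * f₂).eval (α i) := by rw [eval_mul]
      _ = (z + h * ((f₁ * f₂) /ₘ h)).eval (α i) := by rw [this]
      _ = z.eval (α i) := by simp [h0]
  simp only [mul_assoc, hz]
  have hzeval : ∀ x : F, z.eval x = ∑ j ∈ z.support, z.coeff j * x ^ j := by
    intro x; rw [eval_eq_sum]; rfl
  calc ∑ i, u i ^ 2 * z.eval (α i)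
      = ∑ i, ∑ j ∈ z.support, z.coeff j * (u i ^ 2 * α i ^ j) := by
        simp_rw [hzeval, Finset.mul_sum]; congr 1; ext i; congr 1; ext j; ring
    _ = ∑ j ∈ z.support, z.coeff j * ∑ i, u i ^ 2 * α i ^ j := by
        rw [Finset.sum_comm]; simp [Finset.mul_sum]
    _ = 0 := by
        apply Finset.sum_eq_zero
        intro j hj
        have hjd : (j : WithBot ℕ) ≤ z.degree := le_degree_of_mem_supp j hj
        have : (j : WithBot ℕ) ≤ ((n - 2 : ℕ) : WithBot ℕ) := le_trans hjd hdeg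
        have hjle : j ≤ n - 2 := by exact_mod_cast this
        rw [hmom j hjle, mul_zero]
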